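/- Let X be a locally compact metric space and let K be a compact subset of X. If every compact subset of X containing K has nonempty boundary in X, then X \ K contains a connected subset whose closure in X is not compact and intersects K. -/

import Mathlib

open Set Topology OnePoint

/-- Šura-Bura-type lemma: in a compact Hausdorff space, if every clopen set containing `x`
meets the closed set `F`, then the connected component of `x` meets `F`. -/
theorem aux_connectedComponent_meets {Z : Type*} [TopologicalSpace Z] [CompactSpace Z]
    [T2Space Z] (x : Z) (F : Set Z) (hF : IsClosed F)
    (h : ∀ V : Set Z, IsClopen V → x ∈ V → (V ∩ F).Nonempty) :
    (connectedComponent x ∩ F).Nonempty := by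
  haveI : Nonempty { s : Set Z // IsClopen s ∧ x ∈ s } := ⟨⟨univ, isClopen_univ, mem_univ x⟩⟩
  have key : (⋂ s : { s : Set Z // IsClopen s ∧ x ∈ s }, ((s : Set Z) ∩ F)).Nonempty := by
    apply IsCompact.nonempty_iInter_of_directed_nonempty_isCompact_isClosed
    · rintro ⟨s, hs, hxs⟩ ⟨t, ht, hxt⟩
      exact ⟨⟨s ∩ t, hs.inter ht, ⟨hxs, hxt⟩⟩,
        fun y hy => ⟨hy.1.1, hy.2⟩, fun y hy => ⟨hy.1.2, hy.2⟩⟩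
    · rintro ⟨s, hs, hxs⟩
      exact h s hs hxs
    · rintro ⟨s, hs, hxs⟩
      exact (hs.isClosed.inter hF).isCompact
    · rintro ⟨s, hs, hxs⟩
      exact hs.isClosed.inter hF
  rwa [← iInter_inter, ← connectedComponent_eq_iInter_isClopen] at key

/-- Boundary bumping lemma: in a compact connected Hausdorff space, the connected component
of a point in a proper closed subset meets the frontier of that subset. -/
theorem aux_boundary_bumping {Z : Type*} [TopologicalSpace Z] [CompactSpace Z] [T2Space Z]
    [PreconnectedSpace Z] {G : Set Z} (hG : IsClosed G) (hGne : G ≠ univ) {x : Z}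
    (hx : x ∈ G) : (connectedComponentIn G x ∩ frontier G).Nonempty := by
  by_contra hcon
  rw [Set.not_nonempty_iff_eq_empty] at hcon
  haveI : CompactSpace G := isCompact_iff_compactSpace.mp hG.isCompact
  set x' : G := ⟨x, hx⟩
  have hcc : connectedComponentIn G x = Subtype.val '' connectedComponent x' :=
    connectedComponentIn_eq_image hx
  set F' : Set G := Subtype.val ⁻¹' frontier G with hF'def
  have hF' : IsClosed F' := isClosed_frontier.preimage continuous_subtype_val
  have hnotall : ¬ ∀ V : Set G, IsClopen V → x' ∈ V → (V ∩ F').Nonempty := by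
    intro hall
    obtain ⟨y, hy1, hy2⟩ := aux_connectedComponent_meets x' F' hF' hall
    have hmem : (y : Z) ∈ connectedComponentIn G x ∩ frontier G :=
      ⟨hcc ▸ mem_image_of_mem _ hy1, hy2⟩
    rw [hcon] at hmem
    exact hmem
  push_neg at hnotall
  obtain ⟨V, hV, hxV, hVF⟩ := hnotall
  set U : Set Z := Subtype.val '' V with hUdef
  have hUG : U ⊆ G := by rintro _ ⟨y, -, rfl⟩; exact y.2
  have hUF : U ∩ frontier G = ∅ := by
    ext y
    simp only [mem_inter_iff, mem_empty_iff_false, iff_false, not_and]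
    rintro ⟨z, hzV, rfl⟩ hfr
    have : z ∈ V ∩ F' := ⟨hzV, hfr⟩
    rw [hVF] at this
    exact this
  have hUint : U ⊆ interior G := by
    intro y hy
    have hyG : y ∈ G := hUG hy
    have : y ∉ frontier G := fun hfr => by
      have : y ∈ U ∩ frontier G := ⟨hy, hfr⟩
      rw [hUF] at this; exact this
    rw [hG.frontier_eq] at this
    simp only [mem_diff, not_and, not_not] at this
    exact this hyG
  have hUclosed : IsClosed U := hG.isClosedEmbedding_subtypeVal.isClosedMap V hV.isClosed
  have hUopen : IsOpen U := by
    obtain ⟨O, hO, hOV⟩ := isOpen_induced_iff.mp hV.isOpen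
    have hUOG : U = O ∩ G := by
      rw [hUdef, ← hOV, Subtype.image_preimage_coe]
      exact inter_comm _ _
    have : U = O ∩ interior G := by
      apply subset_antisymm
      · exact fun y hy => ⟨(hUOG ▸ hy).1, hUint hy⟩
      · exact fun y hy => hUOG ▸ ⟨hy.1, interior_subset hy.2⟩
    rw [this]
    exact hO.inter isOpen_interior
  have hUuniv : U = univ := IsClopen.eq_univ ⟨hUclosed, hUopen⟩ ⟨x, ⟨x', hxV, rfl⟩⟩
  exact hGne (eq_univ_of_univ_subset (hUuniv ▸ hUG))

/-- A directed intersection of nonempty compact preconnected sets in a Hausdorff space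
is preconnected. -/
theorem aux_iInter_preconnected {Z : Type*} [TopologicalSpace Z] [T2Space Z] {ι : Type*}
    [Nonempty ι] (N : ι → Set Z) (hdir : Directed (· ⊇ ·) N) (hcomp : ∀ i, IsCompact (N i))
    (hconn : ∀ i, IsPreconnected (N i)) (hne : ∀ i, (N i).Nonempty) :
    IsPreconnected (⋂ i, N i) := by
  set s := ⋂ i, N i with hsdef
  intro u v hu hv hsub hneu hnev
  by_contra hcon
  rw [Set.not_nonempty_iff_eq_empty] at hcon
  have hssub : ∀ i, s ⊆ N i := fun i => iInter_subset N i
  have hsclosed : IsClosed s := isClosed_iInter fun i => (hcomp i).isClosed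
  have hE : IsCompact (s ∩ u) := by
    have heq : s ∩ u = s \ v := by
      apply subset_antisymm
      · rintro y ⟨hys, hyu⟩
        refine ⟨hys, fun hyv => ?_⟩
        have : y ∈ s ∩ (u ∩ v) := ⟨hys, hyu, hyv⟩
        rw [hcon] at this; exact this
      · rintro y ⟨hys, hyv⟩
        rcases hsub hys with hyu | hyv'
        · exact ⟨hys, hyu⟩
        · exact absurd hyv' hyv
    rw [heq]
    exact ((hcomp (Classical.arbitrary ι)).of_isClosed_subset hsclosed
      (hssub _)).diff hv
  have hF : IsCompact (s ∩ v) := by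
    have heq : s ∩ v = s \ u := by
      apply subset_antisymm
      · rintro y ⟨hys, hyv⟩
        refine ⟨hys, fun hyu => ?_⟩
        have : y ∈ s ∩ (u ∩ v) := ⟨hys, hyu, hyv⟩
        rw [hcon] at this; exact this
      · rintro y ⟨hys, hyu⟩
        rcases hsub hys with hyu' | hyv
        · exact absurd hyu' hyu
        · exact ⟨hys, hyv⟩
    rw [heq]
    exact ((hcomp (Classical.arbitrary ι)).of_isClosed_subset hsclosed
      (hssub _)).diff hu
  have hdisjEF : Disjoint (s ∩ u) (s ∩ v) := by
    rw [Set.disjoint_iff_inter_eq_empty]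
    rw [← hcon]
    ext y
    constructor
    · rintro ⟨⟨hys, hyu⟩, -, hyv⟩; exact ⟨hys, hyu, hyv⟩
    · rintro ⟨hys, hyu, hyv⟩; exact ⟨⟨hys, hyu⟩, hys, hyv⟩
  obtain ⟨U', V', hU', hV', hEU', hFV', hUV'⟩ := SeparatedNhds.of_isCompact_isCompact hE hF hdisjEF
  have htne : ∀ i, (N i \ (U' ∪ V')).Nonempty := by
    intro i
    by_contra hti
    rw [Set.not_nonempty_iff_eq_empty, diff_eq_empty] at hti
    have h1 : (N i ∩ U').Nonempty := hneu.mono fun y hy => ⟨hssub i hy.1, hEU' hy⟩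
    have h2 : (N i ∩ V').Nonempty := hnev.mono fun y hy => ⟨hssub i hy.1, hFV' hy⟩
    obtain ⟨y, -, hy2⟩ := hconn i U' V' hU' hV' hti h1 h2
    exact (hUV'.le_bot hy2 : y ∈ (∅ : Set Z))
  have hkey : (⋂ i, N i \ (U' ∪ V')).Nonempty := by
    apply IsCompact.nonempty_iInter_of_directed_nonempty_isCompact_isClosed
    · intro i j
      obtain ⟨k, hki, hkj⟩ := hdir i j
      exact ⟨k, diff_subset_diff_left hki, diff_subset_diff_left hkj⟩
    · exact htne
    · exact fun i => (hcomp i).diff (hU'.union hV')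
    · exact fun i => (hcomp i).isClosed.sdiff (hU'.union hV')
  obtain ⟨y, hy⟩ := hkey
  have hys : y ∈ s := mem_iInter.2 fun i => (mem_iInter.1 hy i).1
  have hynot : y ∉ U' ∪ V' := (mem_iInter.1 hy (Classical.arbitrary ι)).2
  rcases hsub hys with hyu | hyv
  · exact hynot (Or.inl (hEU' ⟨hys, hyu⟩))
  · exact hynot (Or.inr (hFV' ⟨hys, hyv⟩))

/-- Kuratowski-type connectivity lemma: if `K` is a compact subset of a locally compact metric
space `X` and every compact subset of `X` containing `K` has nonempty boundary, then `X \ K`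
contains a connected set whose closure in `X` is non-compact and intersects `K`. -/
theorem kuratowski_connectivity_lemma
    {X : Type*} [MetricSpace X] [WeaklyLocallyCompactSpace X]
    (K : Set X) (hK : IsCompact K)
    (h : ∀ D : Set X, IsCompact D → K ⊆ D → (frontier D).Nonempty) :
    ∃ C : Set X, C ⊆ Kᶜ ∧ IsConnected C ∧ ¬ IsCompact (closure C) ∧
      (closure C ∩ K).Nonempty := by
  classical
  set Y := OnePoint X
  haveI : T2Space Y := inferInstance
  set K' : Set Y := (↑) '' K with hK'def
  have hK'comp : IsCompact K' := hK.image OnePoint.continuous_coe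
  have hK'closed : IsClosed K' := hK'comp.isClosed
  have hinf_not : (∞ : Y) ∉ K' := by
    rintro ⟨x, -, hx⟩
    exact OnePoint.coe_ne_infty x hx
  -- Every clopen subset of `Y` containing `∞` meets `K'`.
  have hclopen : ∀ W : Set Y, IsClopen W → (∞ : Y) ∈ W → (W ∩ K').Nonempty := by
    intro W hW hinfW
    by_contra hcon
    rw [Set.not_nonempty_iff_eq_empty] at hcon
    set D : Set X := (↑) ⁻¹' Wᶜ with hDdef
    have hWc_range : Wᶜ ⊆ range ((↑) : X → Y) := by
      intro y hy
      rw [← compl_compl (range ((↑) : X → Y)), OnePoint.compl_range_coe]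
      intro hy'
      exact hy (mem_singleton_iff.mp hy' ▸ hinfW)
    have hDW : (↑) '' D = Wᶜ := image_preimage_eq_of_subset hWc_range
    have hDcomp : IsCompact D := by
      rw [OnePoint.isOpenEmbedding_coe.isInducing.isCompact_iff, hDW]
      exact hW.isOpen.isClosed_compl.isCompact
    have hDclopen : IsClopen D := hW.compl.preimage OnePoint.continuous_coe
    have hKD : K ⊆ D := by
      intro x hx
      intro hxW
      have : (x : Y) ∈ W ∩ K' := ⟨hxW, mem_image_of_mem _ hx⟩
      rw [hcon] at this
      exact this
    obtain ⟨z, hz⟩ := h D hDcomp hKD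
    rw [frontier, hDclopen.isClosed.closure_eq, hDclopen.isOpen.interior_eq, diff_self] at hz
    exact hz
  -- The connected component of `∞` meets `K'`.
  set C' : Set Y := connectedComponent (∞ : Y) with hC'def
  have hC'K : (C' ∩ K').Nonempty :=
    aux_connectedComponent_meets (∞ : Y) K' hK'closed hclopen
  -- Zorn: a minimal continuum containing `∞` and meeting `K'`.
  set 𝒮 : Set (Set Y) :=
    {N | (∞ : Y) ∈ N ∧ (N ∩ K').Nonempty ∧ IsCompact N ∧ IsPreconnected N} with h𝒮def
  have hC'S : C' ∈ 𝒮 :=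
    ⟨mem_connectedComponent, hC'K, isClosed_connectedComponent.isCompact,
      isPreconnected_connectedComponent⟩
  have hzorn : ∀ c ⊆ 𝒮, IsChain (· ⊆ ·) c → c.Nonempty → ∃ lb ∈ 𝒮, ∀ s ∈ c, lb ⊆ s := by
    intro c hcS hchain hcne
    haveI : Nonempty c := hcne.to_subtype
    have hdir : Directed (· ⊇ ·) (fun s : c => (s : Set Y)) := by
      rintro ⟨s, hs⟩ ⟨t, ht⟩
      rcases hchain.total hs ht with hst | hts
      · exact ⟨⟨s, hs⟩, Subset.rfl, hst⟩
      · exact ⟨⟨t, ht⟩, hts, Subset.rfl⟩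
    have hsInter : ⋂₀ c = ⋂ s : c, (s : Set Y) := sInter_eq_iInter
    refine ⟨⋂₀ c, ⟨?_, ?_, ?_, ?_⟩, fun s hs => sInter_subset_of_mem hs⟩
    · exact fun s hs => (hcS hs).1
    · have : (⋂ s : c, ((s : Set Y) ∩ K')).Nonempty := by
        apply IsCompact.nonempty_iInter_of_directed_nonempty_isCompact_isClosed
        · intro i j
          obtain ⟨k, hki, hkj⟩ := hdir i j
          exact ⟨k, inter_subset_inter_left _ hki, inter_subset_inter_left _ hkj⟩
        · exact fun s => (hcS s.2).2.1
        · exact fun s => (hcS s.2).2.2.1.inter_right hK'closed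
        · exact fun s => (hcS s.2).2.2.1.isClosed.inter hK'closed
      rwa [← iInter_inter, ← hsInter] at this
    · obtain ⟨s₀, hs₀⟩ := hcne
      exact (hcS hs₀).2.2.1.of_isClosed_subset
        (isClosed_sInter fun t ht => (hcS ht).2.2.1.isClosed) (sInter_subset_of_mem hs₀)
    · rw [hsInter]
      exact aux_iInter_preconnected _ hdir (fun s => (hcS s.2).2.2.1)
        (fun s => (hcS s.2).2.2.2) (fun s => ((hcS s.2).2.1).mono inter_subset_left)
  obtain ⟨M, -, hMmin⟩ := zorn_superset_nonempty 𝒮 hzorn C' hC'S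
  obtain ⟨hMinf, hMK, hMcomp, hMconn⟩ := hMmin.1
  have hmin : ∀ P : Set Y, P ⊆ M → IsCompact P → IsPreconnected P → (∞ : Y) ∈ P →
      (P ∩ K').Nonempty → P = M := fun P hPM hPc hPpc hPinf hPK =>
    subset_antisymm hPM (hMmin.2 ⟨hPinf, hPK, hPc, hPpc⟩ hPM)
  -- Work inside the subtype `M`.
  have hMclosed : IsClosed M := hMcomp.isClosed
  haveI : CompactSpace M := isCompact_iff_compactSpace.mp hMcomp
  haveI : PreconnectedSpace M := Subtype.preconnectedSpace hMconn
  set pZ : M := ⟨(∞ : Y), hMinf⟩ with hpZdef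
  set KZ : Set M := Subtype.val ⁻¹' K' with hKZdef
  have hKZclosed : IsClosed KZ := hK'closed.preimage continuous_subtype_val
  have hKZne : KZ.Nonempty := by
    obtain ⟨y, hyM, hyK⟩ := hMK
    exact ⟨⟨y, hyM⟩, hyK⟩
  have hpKZ : pZ ∉ KZ := hinf_not
  have hminZ : ∀ P : Set M, IsCompact P → IsPreconnected P → pZ ∈ P → (P ∩ KZ).Nonempty →
      P = univ := by
    intro P hPc hPpc hPp hPK
    have h1 : Subtype.val '' P = M := by
      apply hmin
      · rintro _ ⟨y, -, rfl⟩; exact y.2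
      · exact hPc.image continuous_subtype_val
      · exact hPpc.image _ continuous_subtype_val.continuousOn
      · exact ⟨pZ, hPp, rfl⟩
      · obtain ⟨k, hkP, hkK⟩ := hPK
        exact ⟨(k : Y), ⟨k, hkP, rfl⟩, hkK⟩
    ext z
    simp only [mem_univ, iff_true]
    have hz : (z : Y) ∈ Subtype.val '' P := by rw [h1]; exact z.2
    obtain ⟨w, hwP, hw⟩ := hz
    rwa [Subtype.coe_injective hw] at hwP
  -- The two key consequences of minimality via boundary bumping.
  have keyA : ∀ G : Set M, IsClosed G → G ≠ univ → pZ ∈ G → frontier G ⊆ KZ → False := by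
    intro G hGc hGne hpG hfr
    obtain ⟨y, hyP, hyfr⟩ := aux_boundary_bumping hGc hGne hpG
    have hPc : IsCompact (connectedComponentIn G pZ) := by
      rw [connectedComponentIn_eq_image hpG]
      haveI : CompactSpace G := isCompact_iff_compactSpace.mp hGc.isCompact
      exact isClosed_connectedComponent.isCompact.image continuous_subtype_val
    have hPuniv : connectedComponentIn G pZ = univ :=
      hminZ _ hPc isPreconnected_connectedComponentIn (mem_connectedComponentIn hpG)
        ⟨y, hyP, hfr hyfr⟩
    exact hGne (eq_univ_of_univ_subset (hPuniv ▸ connectedComponentIn_subset G pZ))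
  have keyB : ∀ G : Set M, IsClosed G → G ≠ univ → ∀ k, k ∈ G → k ∈ KZ →
      frontier G ⊆ {pZ} → False := by
    intro G hGc hGne k hkG hkK hfr
    obtain ⟨y, hyP, hyfr⟩ := aux_boundary_bumping hGc hGne hkG
    have hPc : IsCompact (connectedComponentIn G k) := by
      rw [connectedComponentIn_eq_image hkG]
      haveI : CompactSpace G := isCompact_iff_compactSpace.mp hGc.isCompact
      exact isClosed_connectedComponent.isCompact.image continuous_subtype_val
    have hpP : pZ ∈ connectedComponentIn G k := by
      have : y = pZ := hfr hyfr
      rwa [this] at hyP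
    have hPuniv : connectedComponentIn G k = univ :=
      hminZ _ hPc isPreconnected_connectedComponentIn hpP
        ⟨k, mem_connectedComponentIn hkG, hkK⟩
    exact hGne (eq_univ_of_univ_subset (hPuniv ▸ connectedComponentIn_subset G k))
  -- The set `S`.
  set S : Set M := (KZ ∪ {pZ})ᶜ with hSdef
  have hSopen : IsOpen S := (hKZclosed.union isClosed_singleton).isOpen_compl
  have hSne : S.Nonempty := by
    by_contra hcon
    rw [Set.not_nonempty_iff_eq_empty, compl_empty_iff] at hcon
    have h1 : KZᶜ = {pZ} := by
      apply subset_antisymm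
      · intro z hz
        rcases (hcon ▸ mem_univ z : z ∈ KZ ∪ {pZ}) with hzK | hzp
        · exact absurd hzK hz
        · exact hzp
      · intro z hz
        rw [mem_singleton_iff] at hz
        rw [hz]
        exact hpKZ
    have h2 : IsClopen ({pZ} : Set M) := ⟨isClosed_singleton, h1 ▸ hKZclosed.isOpen_compl⟩
    have h3 : ({pZ} : Set M) = univ := h2.eq_univ ⟨pZ, rfl⟩
    obtain ⟨k, hk⟩ := hKZne
    have : k = pZ := by
      have := h3 ▸ mem_univ k
      exact mem_singleton_iff.mp this
    exact hpKZ (this ▸ hk)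
  have hScompl : Sᶜ = KZ ∪ {pZ} := compl_compl _
  have hpS : pZ ∉ S := fun hp => hp (Or.inr rfl)
  have hKZS : ∀ k, k ∈ KZ → k ∉ S := fun k hk hkS => hkS (Or.inl hk)
  -- `pZ ∈ closure S`.
  have hpclS : pZ ∈ closure S := by
    by_contra hcon
    apply keyA Sᶜ hSopen.isClosed_compl
    · intro hh
      obtain ⟨z, hz⟩ := hSne
      have : z ∈ Sᶜ := hh ▸ mem_univ z
      exact this hz
    · exact hpS
    · rw [frontier_compl, hSopen.frontier_eq]
      rintro z ⟨hzcl, hzS⟩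
      rcases (hScompl ▸ hzS : z ∈ KZ ∪ {pZ}) with hzK | hzp
      · exact hzK
      · exact absurd (mem_singleton_iff.mp hzp ▸ hzcl) hcon
  -- `closure S` meets `KZ`.
  have hclSK : (closure S ∩ KZ).Nonempty := by
    by_contra hcon
    rw [Set.not_nonempty_iff_eq_empty] at hcon
    have h1 : closure S = KZᶜ := by
      apply subset_antisymm
      · intro z hz hzK
        have : z ∈ closure S ∩ KZ := ⟨hz, hzK⟩
        rw [hcon] at this
        exact this
      · intro z hz
        by_cases hzp : z = pZ
        · exact hzp ▸ hpclS
        · apply subset_closure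
          intro hzmem
          rcases hzmem with hzK | hzp'
          · exact hz hzK
          · exact hzp (mem_singleton_iff.mp hzp')
    have h2 : IsClopen (closure S) := ⟨isClosed_closure, h1 ▸ hKZclosed.isOpen_compl⟩
    have h3 : closure S = univ := h2.eq_univ (hSne.mono subset_closure)
    obtain ⟨k, hk⟩ := hKZne
    have : k ∈ closure S := h3 ▸ mem_univ k
    rw [h1] at this
    exact this hk
  -- `S` is preconnected.
  have hSconn : IsPreconnected S := by
    by_contra hcon
    unfold IsPreconnected at hcon
    push_neg at hcon
    obtain ⟨u, v, hu, hv, hsub, hneu, hnev, hcap⟩ := hcon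
    set A : Set M := S ∩ u with hAdef
    set B : Set M := S ∩ v with hBdef
    have hAopen : IsOpen A := hSopen.inter hu
    have hBopen : IsOpen B := hSopen.inter hv
    have hAS : A ⊆ S := inter_subset_left
    have hBS : B ⊆ S := inter_subset_left
    have hclAB : closure A ∩ B = ∅ := by
      have hAv : A ⊆ vᶜ := by
        intro z hz hzv
        have : z ∈ S ∩ (u ∩ v) := ⟨hz.1, hz.2, hzv⟩
        rw [hcap] at this
        exact this
      have : closure A ⊆ vᶜ := closure_minimal hAv (isClosed_compl_iff.mpr hv)
      ext z
      simp only [mem_inter_iff, mem_empty_iff_false, iff_false, not_and]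
      exact fun hcl hB => this hcl hB.2
    have hclA_sub : closure A ⊆ A ∪ KZ ∪ {pZ} := by
      intro z hz
      by_cases hzS : z ∈ S
      · rcases hsub hzS with hzu | hzv
        · exact Or.inl (Or.inl ⟨hzS, hzu⟩)
        · exfalso
          have : z ∈ closure A ∩ B := ⟨hz, hzS, hzv⟩
          rw [hclAB] at this
          exact this
      · rcases (hScompl ▸ hzS : z ∈ KZ ∪ {pZ}) with hzK | hzp
        · exact Or.inl (Or.inr hzK)
        · exact Or.inr hzp
    -- (i) `pZ ∈ closure A`.
    have hpclA : pZ ∈ closure A := by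
      by_contra hcon1
      apply keyA Aᶜ hAopen.isClosed_compl
      · intro hh
        obtain ⟨z, hz⟩ := hneu
        have : z ∈ Aᶜ := hh ▸ mem_univ z
        exact this hz
      · exact fun hp => hpS (hAS hp)
      · rw [frontier_compl, hAopen.frontier_eq]
        rintro z ⟨hzcl, hzA⟩
        rcases hclA_sub hzcl with (hzA' | hzK) | hzp
        · exact absurd hzA' hzA
        · exact hzK
        · exact absurd (mem_singleton_iff.mp hzp ▸ hzcl) hcon1
    -- (ii) `closure A` meets `KZ`.
    have hclAK : (closure A ∩ KZ).Nonempty := by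
      by_contra hcon2
      rw [Set.not_nonempty_iff_eq_empty] at hcon2
      obtain ⟨k, hk⟩ := hKZne
      apply keyB Aᶜ hAopen.isClosed_compl ?_ k ?_ hk
      · rw [frontier_compl, hAopen.frontier_eq]
        rintro z ⟨hzcl, hzA⟩
        rcases hclA_sub hzcl with (hzA' | hzK) | hzp
        · exact absurd hzA' hzA
        · exfalso
          have : z ∈ closure A ∩ KZ := ⟨hzcl, hzK⟩
          rw [hcon2] at this
          exact this
        · exact hzp
      · intro hh
        obtain ⟨z, hz⟩ := hneu
        have : z ∈ Aᶜ := hh ▸ mem_univ z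
        exact this hz
      · exact fun hkA => hKZS k hk (hAS hkA)
    -- (iii) `closure A` is preconnected.
    have hclAconn : IsPreconnected (closure A) := by
      by_contra hcon3
      unfold IsPreconnected at hcon3
      push_neg at hcon3
      obtain ⟨u', v', hu', hv', hsub', hneu', hnev', hcap'⟩ := hcon3
      have main : ∀ w₁ w₂ : Set M, IsOpen w₁ → IsOpen w₂ → closure A ⊆ w₁ ∪ w₂ →
          (closure A ∩ w₂).Nonempty → closure A ∩ (w₁ ∩ w₂) = ∅ → pZ ∈ w₁ → False := by
        intro w₁ w₂ hw₁ hw₂ hsubw hnew₂ hcapw hpw₁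
        by_cases hAv : (A ∩ w₂).Nonempty
        · -- use keyA with `G = (A ∩ w₂)ᶜ`
          have hAw₂open : IsOpen (A ∩ w₂) := hAopen.inter hw₂
          have hFclosed : IsClosed (closure A ∩ w₂) := by
            have : closure A ∩ w₂ = closure A \ w₁ := by
              apply subset_antisymm
              · rintro z ⟨hz1, hz2⟩
                refine ⟨hz1, fun hz3 => ?_⟩
                have : z ∈ closure A ∩ (w₁ ∩ w₂) := ⟨hz1, hz3, hz2⟩
                rw [hcapw] at this
                exact this
              · rintro z ⟨hz1, hz2⟩
                rcases hsubw hz1 with hz3 | hz3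
                · exact absurd hz3 hz2
                · exact ⟨hz1, hz3⟩
            rw [this]
            exact isClosed_closure.sdiff hw₁
          apply keyA (A ∩ w₂)ᶜ hAw₂open.isClosed_compl
          · intro hh
            obtain ⟨z, hz⟩ := hAv
            have : z ∈ (A ∩ w₂)ᶜ := hh ▸ mem_univ z
            exact this hz
          · exact fun hp => hpS (hAS hp.1)
          · rw [frontier_compl, hAw₂open.frontier_eq]
            rintro z ⟨hzcl, hzA⟩
            have hzF : z ∈ closure A ∩ w₂ := by
              have h1 : closure (A ∩ w₂) ⊆ closure A ∩ w₂ :=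
                closure_minimal (fun y hy => ⟨subset_closure hy.1, hy.2⟩) hFclosed
              exact h1 hzcl
            have hzA' : z ∉ A := fun hzmem => hzA ⟨hzmem, hzF.2⟩
            rcases hclA_sub hzF.1 with (hzA'' | hzK) | hzp
            · exact absurd hzA'' hzA'
            · exact hzK
            · exfalso
              have hzpZ : z = pZ := mem_singleton_iff.mp hzp
              have : z ∈ closure A ∩ (w₁ ∩ w₂) := ⟨hzF.1, hzpZ ▸ hpw₁, hzF.2⟩
              rw [hcapw] at this
              exact this
        · -- `A ∩ w₂ = ∅` contradicts `closure A ∩ w₂` nonempty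
          rw [Set.not_nonempty_iff_eq_empty] at hAv
          obtain ⟨z, hzcl, hzw₂⟩ := hnew₂
          obtain ⟨a, haw₂, haA⟩ := mem_closure_iff.mp hzcl w₂ hw₂ hzw₂
          have : a ∈ A ∩ w₂ := ⟨haA, haw₂⟩
          rw [hAv] at this
          exact this
      rcases hsub' hpclA with hpu' | hpv'
      · exact main u' v' hu' hv' hsub' hnev' hcap' hpu'
      · apply main v' u' hv' hu' (by rwa [union_comm]) hneu'
          (by rwa [inter_comm v' u']) hpv'
    -- conclude: `closure A` is a proper subcontinuum, contradiction
    have hclAuniv : closure A = univ :=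
      hminZ (closure A) isClosed_closure.isCompact hclAconn hpclA hclAK
    obtain ⟨b, hb⟩ := hnev
    have : b ∈ closure A ∩ B := ⟨hclAuniv ▸ mem_univ b, hb⟩
    rw [hclAB] at this
    exact this
  -- Transfer back to `Y` and then to `X`.
  set SY : Set Y := Subtype.val '' S with hSYdef
  have hSYne : SY.Nonempty := hSne.image _
  have hSYconn : IsPreconnected SY := hSconn.image _ continuous_subtype_val.continuousOn
  have hclSY : closure SY = Subtype.val '' closure S :=
    hMclosed.isClosedEmbedding_subtypeVal.closure_image_eq S
  have hinf_clSY : (∞ : Y) ∈ closure SY := by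
    rw [hclSY]
    exact ⟨pZ, hpclS, rfl⟩
  have hclSYK : (closure SY ∩ K').Nonempty := by
    obtain ⟨q, hq1, hq2⟩ := hclSK
    exact ⟨(q : Y), hclSY ▸ ⟨q, hq1, rfl⟩, hq2⟩
  have hSYsub : ∀ y ∈ SY, y ∉ K' ∧ y ≠ (∞ : Y) := by
    rintro _ ⟨z, hz, rfl⟩
    constructor
    · exact fun hzK => hz (Or.inl hzK)
    · intro hzinf
      apply hz
      right
      exact mem_singleton_iff.mpr (Subtype.ext hzinf)
  have hSYrange : SY ⊆ range ((↑) : X → Y) := by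
    intro y hy
    rw [← compl_compl (range ((↑) : X → Y)), OnePoint.compl_range_coe]
    exact fun hy' => (hSYsub y hy).2 (mem_singleton_iff.mp hy')
  set C : Set X := ((↑) : X → Y) ⁻¹' SY with hCdef
  have hCSY : (↑) '' C = SY := image_preimage_eq_of_subset hSYrange
  refine ⟨C, ?_, ?_, ?_, ?_⟩
  · intro x hx hxK
    exact (hSYsub _ hx).1 (mem_image_of_mem _ hxK)
  · constructor
    · obtain ⟨y, hy⟩ := hSYne
      obtain ⟨x, rfl⟩ := hSYrange hy
      exact ⟨x, hy⟩
    · rw [← OnePoint.isOpenEmbedding_coe.isInducing.isPreconnected_image, hCSY]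
      exact hSYconn
  · intro hcomp
    have h1 : IsCompact ((↑) '' closure C : Set Y) := hcomp.image OnePoint.continuous_coe
    have h2 : IsClosed ((↑) '' closure C : Set Y) := h1.isClosed
    have h3 : closure SY ⊆ (↑) '' closure C := by
      apply closure_minimal _ h2
      rw [← hCSY]
      exact image_mono subset_closure
    obtain ⟨x, -, hx⟩ := h3 hinf_clSY
    exact OnePoint.coe_ne_infty x hx
  · obtain ⟨q, hq1, hq2⟩ := hclSYK
    obtain ⟨x, hxK, rfl⟩ := hq2
    refine ⟨x, ?_, hxK⟩
    have heq := OnePoint.isOpenEmbedding_coe.isOpenMap.preimage_closure_eq_closure_preimage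
      OnePoint.continuous_coe SY
    have : x ∈ ((↑) : X → Y) ⁻¹' closure SY := hq1
    rwa [heq] at this
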